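/- Let 1 ≤ k ≤ n. The Turán graph T(n,k) is determined by its adjacency spectrum: every finite simple graph whose adjacency matrix has the same characteristic polynomial (over ℝ) as that of T(n,k) is isomorphic to T(n,k). -/

import Mathlib

open Polynomial
open Matrix

section spectral
variable {m : Type*} [Fintype m] [DecidableEq m]

lemma my_charpoly_conj (A P Q : Matrix m m ℝ) (hPQ : P * Q = 1) :
    (P * A * Q).charpoly = A.charpoly := by
  have hsc : ∀ M : Matrix m m ℝ, charmatrix M
      = (X : ℝ[X]) • (1 : Matrix m m ℝ[X]) - (C : ℝ →+* ℝ[X]).mapMatrix M := by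
    intro M
    rw [charmatrix, smul_eq_diagonal_mul]
    congr 1
    simp [Matrix.scalar]
  have key : charmatrix (P * A * Q)
      = (C : ℝ →+* ℝ[X]).mapMatrix P * charmatrix A * (C : ℝ →+* ℝ[X]).mapMatrix Q := by
    rw [hsc, hsc, Matrix.mul_sub, Matrix.sub_mul]
    congr 1
    · rw [Matrix.mul_smul, Matrix.smul_mul, mul_one, ← _root_.map_mul, hPQ, RingHom.map_one]
    · rw [← _root_.map_mul, ← _root_.map_mul]
  have hdet : ((C : ℝ →+* ℝ[X]).mapMatrix P).det * ((C : ℝ →+* ℝ[X]).mapMatrix Q).det = 1 := by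
    rw [← det_mul, ← _root_.map_mul, hPQ, RingHom.map_one, det_one]
  calc (P * A * Q).charpoly
      = ((C : ℝ →+* ℝ[X]).mapMatrix P * charmatrix A * (C : ℝ →+* ℝ[X]).mapMatrix Q).det := by
        rw [Matrix.charpoly, key]
    _ = (((C : ℝ →+* ℝ[X]).mapMatrix P).det * ((C : ℝ →+* ℝ[X]).mapMatrix Q).det)
          * (charmatrix A).det := by rw [det_mul, det_mul]; ring
    _ = A.charpoly := by rw [hdet, one_mul, Matrix.charpoly]

lemma my_charpoly_diagonal (d : m → ℝ) :
    (Matrix.diagonal d).charpoly = ∏ i, (X - C (d i)) := by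
  have : charmatrix (Matrix.diagonal d) = Matrix.diagonal fun i => X - C (d i) := by
    ext i j
    rcases eq_or_ne i j with rfl | hij
    · simp [charmatrix_apply_eq]
    · simp [charmatrix_apply_ne _ _ _ hij, Matrix.diagonal_apply_ne _ hij]
  rw [Matrix.charpoly, this, det_diagonal]

lemma my_charpoly_hermitian {A : Matrix m m ℝ} (hA : A.IsHermitian) :
    A.charpoly = (((Finset.univ : Finset m).val.map hA.eigenvalues).map fun a => X - C a).prod := by
  conv_lhs => rw [hA.spectral_theorem, Unitary.conjStarAlgAut_apply]
  rw [my_charpoly_conj _ _ _ ((Matrix.mem_unitaryGroup_iff).mp (hA.eigenvectorUnitary).2)]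
  rw [show (RCLike.ofReal ∘ hA.eigenvalues : m → ℝ) = hA.eigenvalues by ext i; simp]
  rw [my_charpoly_diagonal]
  rw [Multiset.map_map, ← Finset.prod_eq_multiset_prod]
  rfl

lemma my_roots_charpoly {A : Matrix m m ℝ} (hA : A.IsHermitian) :
    A.charpoly.roots = (Finset.univ : Finset m).val.map hA.eigenvalues := by
  rw [my_charpoly_hermitian hA, Polynomial.roots_multiset_prod_X_sub_C]

end spectral
open Polynomial Matrix

section trace
variable {m : Type*} [Fintype m] [DecidableEq m]

lemma my_trace_sq {A : Matrix m m ℝ} (hA : A.IsHermitian) :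
    (A * A).trace = ∑ i, hA.eigenvalues i * hA.eigenvalues i := by
  set U : Matrix m m ℝ := (hA.eigenvectorUnitary : Matrix m m ℝ)
  set D : Matrix m m ℝ := diagonal (RCLike.ofReal ∘ hA.eigenvalues)
  have hU : U * star U = 1 := (Matrix.mem_unitaryGroup_iff).mp (hA.eigenvectorUnitary).2
  have hU' : star U * U = 1 := (Matrix.mem_unitaryGroup_iff').mp (hA.eigenvectorUnitary).2
  have hAA : A * A = U * (D * D) * star U := by
    conv_lhs => rw [hA.spectral_theorem]
    calc (U * D * star U) * (U * D * star U)
        = U * D * (star U * U) * D * star U := by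
          simp only [Matrix.mul_assoc]
      _ = U * (D * D) * star U := by rw [hU']; simp only [Matrix.mul_one, Matrix.mul_assoc]
  rw [hAA, Matrix.trace_mul_comm, ← Matrix.mul_assoc, hU', Matrix.one_mul]
  have : D * D = diagonal fun i => hA.eigenvalues i * hA.eigenvalues i := by
    rw [diagonal_mul_diagonal]
    rfl
  rw [this, Matrix.trace_diagonal]

lemma my_adj_hermitian {V : Type} [Fintype V] [DecidableEq V] (G : SimpleGraph V)
    [DecidableRel G.Adj] : (G.adjMatrix ℝ).IsHermitian := by
  unfold Matrix.IsHermitian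
  rw [conjTranspose, show (star : ℝ → ℝ) = id from rfl, Matrix.map_id, SimpleGraph.transpose_adjMatrix]

lemma my_trace_adj_sq {V : Type} [Fintype V] [DecidableEq V] (G : SimpleGraph V)
    [DecidableRel G.Adj] :
    (G.adjMatrix ℝ * G.adjMatrix ℝ).trace = 2 * (G.edgeFinset.card : ℝ) := by
  rw [Matrix.trace]
  have : ∀ v, (G.adjMatrix ℝ * G.adjMatrix ℝ).diag v = (G.degree v : ℝ) := fun v => by
    rw [Matrix.diag_apply, SimpleGraph.adjMatrix_mul_self_apply_self]
  rw [Fintype.sum_congr _ _ this]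
  rw [← Nat.cast_sum]
  rw [SimpleGraph.sum_degrees_eq_twice_card_edges]
  push_cast
  ring

end trace
open Polynomial Matrix

lemma my_rank_turan_le (n k : ℕ) (hk : 1 ≤ k) :
    ((SimpleGraph.turanGraph n k).adjMatrix ℝ).rank ≤ k := by
  set E : Matrix (Fin n) (Fin k) ℝ :=
    Matrix.of fun v r => if (v : ℕ) % k = (r : ℕ) then 1 else 0 with hE
  set F : Matrix (Fin k) (Fin n) ℝ :=
    Matrix.of fun r w => if (r : ℕ) ≠ (w : ℕ) % k then 1 else 0 with hF
  have hEF : (SimpleGraph.turanGraph n k).adjMatrix ℝ = E * F := by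
    ext v w
    rw [Matrix.mul_apply]
    rw [Finset.sum_eq_single (⟨(v : ℕ) % k, Nat.mod_lt _ hk⟩ : Fin k)]
    · rw [SimpleGraph.adjMatrix_apply]
      simp [hE, hF, SimpleGraph.turanGraph]
      by_cases hvw : (v : ℕ) % k = (w : ℕ) % k <;> simp [hvw]
    · intro r _ hr
      have : ¬ ((v : ℕ) % k = (r : ℕ)) := fun hc => hr (Fin.ext hc.symm)
      simp [hE, this]
    · intro habs
      exact absurd (Finset.mem_univ _) habs
  rw [hEF]
  calc (E * F).rank ≤ F.rank := Matrix.rank_mul_le_right E F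
    _ ≤ Fintype.card (Fin k) := Matrix.rank_le_card_height F
    _ = k := Fintype.card_fin k

lemma my_rank_of_clique {V : Type} [Fintype V] [DecidableEq V] (G : SimpleGraph V)
    [DecidableRel G.Adj] {k : ℕ} (hk : 1 ≤ k) (s : Finset V) (hcard : s.card = k + 1)
    (hclique : G.IsClique s) : k + 1 ≤ (G.adjMatrix ℝ).rank := by
  classical
  set f : Fin (k + 1) → V := fun i => (s.equivFin.symm ⟨i.1, by rw [hcard]; exact i.2⟩ : V) with hf
  have hfinj : Function.Injective f := by
    intro i j hij
    have := s.equivFin.symm.injective (Subtype.coe_injective hij)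
    exact Fin.ext (by simpa using congrArg Fin.val this)
  have hfmem : ∀ i, f i ∈ s := fun i => (s.equivFin.symm ⟨i.1, by rw [hcard]; exact i.2⟩).2
  set A := G.adjMatrix ℝ with hA
  set P : Matrix (Fin (k + 1)) V ℝ := Matrix.of fun i v => if v = f i then 1 else 0 with hP
  set J : Matrix (Fin (k + 1)) (Fin (k + 1)) ℝ := Matrix.of fun _ _ => 1 with hJ
  set M : Matrix (Fin (k + 1)) (Fin (k + 1)) ℝ := J - 1 with hM
  have hPAP : P * A * Pᵀ = M := by
    ext i j
    rw [Matrix.mul_apply]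
    have hrow : ∀ w, (P * A) i w = A (f i) w := by
      intro w
      rw [Matrix.mul_apply]
      rw [Finset.sum_eq_single (f i)]
      · simp [hP]
      · intro v _ hv; simp [hP, hv]
      · intro habs; exact absurd (Finset.mem_univ _) habs
    rw [Finset.sum_eq_single (f j)]
    · rw [hrow, Matrix.transpose_apply]
      have hPjj : P j (f j) = 1 := by simp [hP]
      rw [hPjj, mul_one]
      rcases eq_or_ne i j with rfl | hij
      · simp [hA, hM, hJ, Matrix.sub_apply, Matrix.one_apply]
      · have hadj : G.Adj (f i) (f j) := hclique (hfmem i) (hfmem j) (fun hc => hij (hfinj hc))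
        rw [hA, SimpleGraph.adjMatrix_apply, if_pos hadj, hM]
        simp [hJ, Matrix.sub_apply, Matrix.one_apply, hij]
    · intro w _ hw
      have : P j w = 0 := by simp [hP, hw]
      rw [Matrix.transpose_apply, this, mul_zero]
    · intro habs; exact absurd (Finset.mem_univ _) habs
  set c : ℝ := (k : ℝ)⁻¹ with hc
  have hk0 : (k : ℝ) ≠ 0 := Nat.cast_ne_zero.mpr (by omega)
  set N : Matrix (Fin (k + 1)) (Fin (k + 1)) ℝ := c • J - 1 with hN
  have hJJ : J * J = (((k : ℝ) + 1)) • J := by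
    ext i j
    rw [Matrix.mul_apply, Matrix.smul_apply, hJ]
    simp only [Matrix.of_apply, mul_one, Finset.sum_const, Finset.card_univ,
      Fintype.card_fin, nsmul_eq_mul, smul_eq_mul]
    push_cast
    ring
  have hck : c * ((k : ℝ) + 1) - c = 1 := by
    rw [hc]
    field_simp
    ring
  have hMN : M * N = 1 := by
    rw [hM, hN, sub_mul]
    simp only [Matrix.mul_sub, Matrix.mul_one, Matrix.one_mul, Matrix.mul_smul]
    rw [hJJ, smul_smul]
    have h2 : (c * ((k : ℝ) + 1)) • J - J - (c • J - 1)
        = ((c * ((k : ℝ) + 1) - 1 - c)) • J + 1 := by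
      rw [sub_smul, sub_smul, one_smul]
      abel
    rw [h2]
    have h3 : c * ((k : ℝ) + 1) - 1 - c = 0 := by linarith [hck]
    rw [h3, zero_smul, zero_add]
  have hNM : N * M = 1 := mul_eq_one_comm.mp hMN
  have hMunit : IsUnit M := ⟨⟨M, N, hMN, hNM⟩, rfl⟩
  have hrankM : M.rank = k + 1 := by
    rw [Matrix.rank_of_isUnit M hMunit, Fintype.card_fin]
  calc k + 1 = M.rank := hrankM.symm
    _ = (P * A * Pᵀ).rank := by rw [hPAP]
    _ ≤ (P * A).rank := Matrix.rank_mul_le_left _ _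
    _ ≤ A.rank := Matrix.rank_mul_le_right _ _
open Polynomial Matrix

lemma my_card_ne_zero {m : Type*} [Fintype m] (g : m → ℝ) :
    Fintype.card {i // g i ≠ 0}
      = ((Finset.univ : Finset m).val.map g).countP (fun x => x ≠ 0) := by
  classical
  rw [Fintype.card_subtype, Multiset.countP_map]
  rw [Finset.card_def, Finset.filter_val]

/-- The Turán graph `T(n,k)` is determined by its adjacency spectrum: every finite simple
graph whose adjacency matrix has the same characteristic polynomial (over `ℝ`) as that of
`T(n,k)` is isomorphic to `T(n,k)`. -/
theorem turanGraph_DS (n k : ℕ) (hk : 1 ≤ k) (hkn : k ≤ n)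
    {V : Type} [Fintype V] [DecidableEq V] (G : SimpleGraph V) [DecidableRel G.Adj]
    (h : (G.adjMatrix ℝ).charpoly = ((SimpleGraph.turanGraph n k).adjMatrix ℝ).charpoly) :
    Nonempty (G ≃g SimpleGraph.turanGraph n k) := by
  classical
  have hk0 : 0 < k := hk
  have hG : (G.adjMatrix ℝ).IsHermitian := my_adj_hermitian G
  have hT : ((SimpleGraph.turanGraph n k).adjMatrix ℝ).IsHermitian :=
    my_adj_hermitian (SimpleGraph.turanGraph n k)
  have hroots : (Finset.univ : Finset V).val.map hG.eigenvalues
      = (Finset.univ : Finset (Fin n)).val.map hT.eigenvalues := by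
    rw [← my_roots_charpoly hG, ← my_roots_charpoly hT, h]
  have cardV : Fintype.card V = n := by
    have := congrArg Multiset.card hroots
    simpa using this
  subst cardV
  -- equal number of edges
  have hedge : G.edgeFinset.card = (SimpleGraph.turanGraph (Fintype.card V) k).edgeFinset.card := by
    have htr : (G.adjMatrix ℝ * G.adjMatrix ℝ).trace
        = ((SimpleGraph.turanGraph (Fintype.card V) k).adjMatrix ℝ
            * (SimpleGraph.turanGraph (Fintype.card V) k).adjMatrix ℝ).trace := by
      rw [my_trace_sq hG, my_trace_sq hT]
      have h1 : ∑ i, hG.eigenvalues i * hG.eigenvalues i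
          = (((Finset.univ : Finset V).val.map hG.eigenvalues).map fun x => x * x).sum := by
        rw [Multiset.map_map]
        rfl
      have h2 : ∑ i, hT.eigenvalues i * hT.eigenvalues i
          = (((Finset.univ : Finset (Fin (Fintype.card V))).val.map hT.eigenvalues).map
              fun x => x * x).sum := by
        rw [Multiset.map_map]
        rfl
      rw [h1, h2, hroots]
    rw [my_trace_adj_sq, my_trace_adj_sq] at htr
    have : (G.edgeFinset.card : ℝ) = ((SimpleGraph.turanGraph (Fintype.card V) k).edgeFinset.card : ℝ) := by
      linarith
    exact_mod_cast this
  -- equal rank, hence cliquefreeness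
  have hrank : (G.adjMatrix ℝ).rank = ((SimpleGraph.turanGraph (Fintype.card V) k).adjMatrix ℝ).rank := by
    rw [hG.rank_eq_card_non_zero_eigs, hT.rank_eq_card_non_zero_eigs,
      my_card_ne_zero, my_card_ne_zero, hroots]
  have hrankle : (G.adjMatrix ℝ).rank ≤ k :=
    hrank.trans_le (my_rank_turan_le (Fintype.card V) k hk)
  have hcf : G.CliqueFree (k + 1) := by
    intro t ht
    have := my_rank_of_clique G hk t ht.2 ht.1
    omega
  -- Turán maximality
  obtain ⟨J, instJ, hJ⟩ := SimpleGraph.exists_isTuranMaximal (V := V) (r := k) hk0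
  obtain ⟨giso⟩ := hJ.nonempty_iso_turanGraph
  have hJedge : J.edgeFinset.card = (SimpleGraph.turanGraph (Fintype.card V) k).edgeFinset.card :=
    giso.card_edgeFinset_eq
  have itm : G.IsTuranMaximal k := by
    refine ⟨hcf, fun H _ hH => ?_⟩
    calc H.edgeFinset.card ≤ J.edgeFinset.card := hJ.2 hH
      _ = G.edgeFinset.card := by rw [hJedge, ← hedge]
  exact (SimpleGraph.isTuranMaximal_iff_nonempty_iso_turanGraph hk0).mp itm
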